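/- (NP-hardness gadget correctness) In the tree constructed from a multiset A of positive integers with sum 2K — central node u; for each a ∈ A a leaf connected to u by an edge of cost a; start node s and end node t each connected to u by edges of cost 6K; midpoint node v connected to u by an edge of cost K; with requests at s on window [0,6K], at t on [12K,18K], at u and at every integer-leaf on [6K,12K], and at v on both [3K,9K] and [9K,15K] — there exists a unit-speed tour servicing all requests within their windows if and only if A can be partitioned into two sub-multisets each summing to K. -/

import Mathlib

/-- The nodes of the NP-hardness gadget tree: start `s`, end `t`, central node `u`,
midpoint `v`, and one leaf per element of the multiset. -/
inductive GadgetNode (n : ℕ) where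
  | s : GadgetNode n
  | t : GadgetNode n
  | u : GadgetNode n
  | v : GadgetNode n
  | leaf : Fin n → GadgetNode n
  deriving DecidableEq

/-- Distance from the central node `u` in the gadget tree: `s` and `t` are at distance
`6K`, `v` at distance `K`, and the leaf for integer `A i` at distance `A i`. -/
def distToCenter {n : ℕ} (K : ℕ) (A : Fin n → ℕ) : GadgetNode n → ℝ
  | .s => 6 * K
  | .t => 6 * K
  | .u => 0
  | .v => K
  | .leaf i => A i

/-- The tree metric of the gadget (a star centered at `u`). -/
def gadgetDist {n : ℕ} (K : ℕ) (A : Fin n → ℕ) (x y : GadgetNode n) : ℝ :=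
  if x = y then 0 else distToCenter K A x + distToCenter K A y

namespace Stmt17Aux

variable {n : ℕ} {K : ℕ} {A : Fin n → ℕ}

lemma dtc_nonneg (K : ℕ) (A : Fin n → ℕ) (x : GadgetNode n) : 0 ≤ distToCenter K A x := by
  cases x <;> simp [distToCenter]

lemma gd_nonneg (x y : GadgetNode n) : 0 ≤ gadgetDist K A x y := by
  unfold gadgetDist; split
  · exact le_refl 0
  · exact add_nonneg (dtc_nonneg K A x) (dtc_nonneg K A y)

lemma gd_eq (x y : GadgetNode n) (h : x ≠ y) :
    gadgetDist K A x y = distToCenter K A x + distToCenter K A y := by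
  simp [gadgetDist, h]

lemma gd_triangle (x y z : GadgetNode n) :
    gadgetDist K A x z ≤ gadgetDist K A x y + gadgetDist K A y z := by
  rcases eq_or_ne x z with rfl | hxz
  · simpa [gadgetDist] using add_nonneg (gd_nonneg (K := K) (A := A) x y) (gd_nonneg (K := K) (A := A) y x)
  rcases eq_or_ne x y with rfl | hxy
  · simp [gadgetDist, hxz]
  rcases eq_or_ne y z with rfl | hyz
  · simp [gadgetDist, hxz, hxy, Ne.symm hxy]
  · rw [gd_eq x z hxz, gd_eq x y hxy, gd_eq y z hyz]
    have := dtc_nonneg K A y; linarith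


section Tour

variable {N : ℕ} {node : Fin (N + 1) → GadgetNode n} {time : Fin (N + 1) → ℝ}

lemma tele (hstep : ∀ k : Fin N, gadgetDist K A (node k.castSucc) (node k.succ) ≤
      time k.succ - time k.castSucc) :
    ∀ (d : ℕ) (j k : Fin (N + 1)), j.val + d = k.val →
      gadgetDist K A (node j) (node k) ≤ time k - time j := by
  intro d
  induction d with
  | zero =>
    intro j k h
    have : j = k := Fin.ext (by omega)
    subst this
    simp [gadgetDist]
  | succ d ih =>
    intro j k h
    have hjN : j.val < N := by omega
    have h1 := hstep ⟨j.val, hjN⟩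
    have hj : (⟨j.val, hjN⟩ : Fin N).castSucc = j := by
      apply Fin.ext; simp
    rw [hj] at h1
    have h2 := ih (⟨j.val, hjN⟩ : Fin N).succ k (by simp; omega)
    calc gadgetDist K A (node j) (node k)
        ≤ gadgetDist K A (node j) (node (⟨j.val, hjN⟩ : Fin N).succ) +
          gadgetDist K A (node (⟨j.val, hjN⟩ : Fin N).succ) (node k) := gd_triangle _ _ _
      _ ≤ (time (⟨j.val, hjN⟩ : Fin N).succ - time j) +
          (time k - time (⟨j.val, hjN⟩ : Fin N).succ) := add_le_add h1 h2
      _ = time k - time j := by ring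

lemma gap (hstep : ∀ k : Fin N, gadgetDist K A (node k.castSucc) (node k.succ) ≤
      time k.succ - time k.castSucc) {j k : Fin (N + 1)} (hjk : j ≤ k) :
    gadgetDist K A (node j) (node k) ≤ time k - time j :=
  tele hstep (k.val - j.val) j k (by omega)

lemma time_mono (hstep : ∀ k : Fin N, gadgetDist K A (node k.castSucc) (node k.succ) ≤
      time k.succ - time k.castSucc) {j k : Fin (N + 1)} (hjk : j ≤ k) :
    time j ≤ time k := by
  have := gap hstep hjk
  have := gd_nonneg (K := K) (A := A) (node j) (node k)
  linarith

lemma chain (hstep : ∀ k : Fin N, gadgetDist K A (node k.castSucc) (node k.succ) ≤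
      time k.succ - time k.castSucc)
    (kk : Fin n → Fin (N + 1)) (hkk : ∀ i, node (kk i) = GadgetNode.leaf i) :
    ∀ (m : ℕ) (S : Finset (Fin n)), S.card ≤ m → ∀ (a b : Fin (N + 1)), a ≤ b →
      (∀ i ∈ S, a < kk i ∧ kk i < b) →
      (∀ i ∈ S, node a ≠ GadgetNode.leaf i) →
      (∀ i ∈ S, node b ≠ GadgetNode.leaf i) →
      (S.Nonempty ∨ node a ≠ node b) →
      distToCenter K A (node a) + distToCenter K A (node b) + 2 * ∑ i ∈ S, (A i : ℝ)
        ≤ time b - time a := by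
  intro m
  induction m with
  | zero =>
    intro S hcard a b hab _ _ _ hne
    have hS : S = ∅ := Finset.card_eq_zero.mp (Nat.le_zero.mp hcard)
    subst hS
    rcases hne with h | h
    · exact absurd h (by simp)
    · have := gap hstep hab
      rw [gd_eq _ _ h] at this
      simpa using this
  | succ m ih =>
    intro S hcard a b hab hbetween hna hnb hne
    rcases S.eq_empty_or_nonempty with rfl | hS
    · exact ih ∅ (by simp) a b hab (by simp) (by simp) (by simp)
        (hne.imp_left (fun h => absurd h (by simp)))
    obtain ⟨i, hiS, hmax⟩ := S.exists_max_image kk hS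
    have hia := (hbetween i hiS).1
    have hib := (hbetween i hiS).2
    -- segment from kk i to b
    have hseg : distToCenter K A (GadgetNode.leaf i) + distToCenter K A (node b)
        ≤ time b - time (kk i) := by
      have := gap hstep (le_of_lt hib)
      rw [hkk i, gd_eq _ _ (fun h => hnb i hiS h.symm)] at this
      exact this
    -- induction on S.erase i with endpoints a, kk i
    have hrec := ih (S.erase i) (by
        have := Finset.card_erase_of_mem hiS; omega)
      a (kk i) (le_of_lt hia)
      (fun j hj => by
        have hjS := Finset.mem_of_mem_erase hj
        have hji : j ≠ i := Finset.ne_of_mem_erase hj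
        refine ⟨(hbetween j hjS).1, lt_of_le_of_ne (hmax j hjS) ?_⟩
        intro hEq
        apply hji
        have := hkk j
        rw [hEq, hkk i] at this
        exact (GadgetNode.leaf.inj this).symm)
      (fun j hj => hna j (Finset.mem_of_mem_erase hj))
      (fun j hj => by
        rw [hkk i]
        intro hEq
        exact Finset.ne_of_mem_erase hj (GadgetNode.leaf.inj hEq.symm))
      (Or.inr (by rw [hkk i]; exact hna i hiS))
    rw [hkk i] at hrec
    have hsum : ∑ j ∈ S, (A j : ℝ) = (A i : ℝ) + ∑ j ∈ S.erase i, (A j : ℝ) :=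
      (Finset.add_sum_erase S _ hiS).symm
    have hdi : distToCenter K A (GadgetNode.leaf i) = (A i : ℝ) := rfl
    rw [hdi] at hseg hrec
    rw [hsum]
    linarith

end Tour

section Construct

/-- The step relation for a tour schedule given as a list. -/
def Rel (K : ℕ) (A : Fin n → ℕ) (p q : GadgetNode n × ℝ) : Prop :=
  gadgetDist K A p.1 q.1 ≤ q.2 - p.2

/-- Visit the given leaves in order, starting from `u` at time `t0`. -/
def leafWalk (A : Fin n → ℕ) : List (Fin n) → ℝ → List (GadgetNode n × ℝ)
  | [], _ => []
  | i :: is, t0 => (GadgetNode.leaf i, t0 + A i) :: leafWalk A is (t0 + 2 * A i)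

lemma leafWalk_mem (hA : ∀ i, 0 < A i) :
    ∀ (l : List (Fin n)) (t0 : ℝ) (i : Fin n), i ∈ l →
      ∃ c, (GadgetNode.leaf i, c) ∈ leafWalk A l t0 ∧ t0 ≤ c ∧
        c ≤ t0 + 2 * ((l.map fun j => (A j : ℝ)).sum) := by
  intro l
  induction l with
  | nil => intro t0 i h; simp at h
  | cons j l ih =>
    intro t0 i h
    have hj : (0:ℝ) ≤ A j := Nat.cast_nonneg _
    have hsum : (0:ℝ) ≤ (l.map fun j => (A j : ℝ)).sum := by
      apply List.sum_nonneg; intro x hx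
      simp only [List.mem_map] at hx
      obtain ⟨y, _, rfl⟩ := hx
      exact Nat.cast_nonneg _
    rcases List.mem_cons.mp h with rfl | h
    · exact ⟨t0 + A i, by simp [leafWalk], by linarith, by simp; linarith⟩
    · obtain ⟨c, hc1, hc2, hc3⟩ := ih (t0 + 2 * A j) i h
      refine ⟨c, by simp [leafWalk]; right; exact hc1, by linarith, by simp; linarith⟩

lemma rel_step (i : Fin n) (t0 : ℝ) (y : GadgetNode n × ℝ)
    (h : Rel K A (GadgetNode.u, t0 + 2 * A i) y) :
    Rel K A (GadgetNode.leaf i, t0 + A i) y := by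
  unfold Rel gadgetDist at h ⊢
  have hAi : (0:ℝ) ≤ A i := Nat.cast_nonneg _
  rcases eq_or_ne (GadgetNode.leaf i) y.1 with hEq | hNe
  · rw [if_pos hEq]
    rw [if_neg (by rw [← hEq]; simp)] at h
    rw [← hEq] at h
    simp [distToCenter] at h ⊢
    linarith
  · rw [if_neg hNe]
    rcases eq_or_ne (GadgetNode.u (n := n)) y.1 with hEq2 | hNe2
    · rw [if_pos hEq2] at h
      rw [← hEq2]
      simp [distToCenter] at h ⊢
      linarith
    · rw [if_neg hNe2] at h
      simp [distToCenter] at h ⊢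
      linarith

lemma leafWalk_chain :
    ∀ (l : List (Fin n)) (t0 : ℝ) (rest : List (GadgetNode n × ℝ)),
      List.Chain' (Rel K A) ((GadgetNode.u, t0 + 2 * (l.map fun j => (A j : ℝ)).sum) :: rest) →
      List.Chain' (Rel K A) ((GadgetNode.u, t0) :: (leafWalk A l t0 ++ rest)) := by
  intro l
  induction l with
  | nil => intro t0 rest h; simpa [leafWalk] using h
  | cons j l ih =>
    intro t0 rest h
    have h' : List.Chain' (Rel K A)
        ((GadgetNode.u, (t0 + 2 * A j) + 2 * (l.map fun j => (A j : ℝ)).sum) :: rest) := by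
      have : (t0 + 2 * A j) + 2 * (l.map fun j => (A j : ℝ)).sum
          = t0 + 2 * ((j :: l).map fun j => (A j : ℝ)).sum := by
        rw [List.map_cons, List.sum_cons]; ring
      rw [this]; exact h
    have hih := ih (t0 + 2 * A j) rest h'
    unfold List.Chain' at hih ⊢
    rw [List.isChain_cons] at hih
    simp only [leafWalk, List.cons_append]
    rw [List.isChain_cons_cons, List.isChain_cons]
    refine ⟨?_, ?_, hih.2⟩
    · unfold Rel
      simp [gadgetDist, distToCenter]
    · intro y hy
      exact rel_step j t0 y (hih.1 y hy)

lemma ofList (l : List (GadgetNode n × ℝ)) (hne : l ≠ [])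
    (hch : List.Chain' (Rel K A) l) :
    ∃ (N : ℕ) (node : Fin (N + 1) → GadgetNode n) (time : Fin (N + 1) → ℝ),
      (∀ k : Fin N, gadgetDist K A (node k.castSucc) (node k.succ) ≤
        time k.succ - time k.castSucc) ∧
      ∀ p ∈ l, ∃ k, node k = p.1 ∧ time k = p.2 := by
  have hlen : 0 < l.length := List.length_pos_iff.mpr hne
  refine ⟨l.length - 1, fun k => (l.get (Fin.cast (by omega) k)).1,
    fun k => (l.get (Fin.cast (by omega) k)).2, ?_, ?_⟩
  · intro k
    have := List.isChain_iff_getElem.mp hch k.val (by omega)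
    exact this
  · intro p hp
    obtain ⟨m, hm⟩ := List.mem_iff_get.mp hp
    exact ⟨Fin.cast (by omega) m, by rw [← hm]; rfl, by rw [← hm]; rfl⟩

end Construct

end Stmt17Aux


set_option maxHeartbeats 1000000 in
/-- NP-hardness gadget correctness: in the tree built from a multiset `A` of positive
integers summing to `2K` — with requests at `s` on window `[0,6K]`, at `t` on
`[12K,18K]`, at `u` and every leaf on `[6K,12K]`, and at `v` on both `[3K,9K]` and
`[9K,15K]` — there is a unit-speed tour (a finite schedule of node visits whose
consecutive travel times are at least the tree distances) servicing every request
within its window if and only if `A` can be partitioned into two sub-multisets each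
summing to `K`. -/
theorem stmt17 (n : ℕ) (K : ℕ) (hK : 0 < K) (A : Fin n → ℕ) (hA : ∀ i, 0 < A i)
    (hsum : ∑ i, A i = 2 * K) :
    (∃ (N : ℕ) (node : Fin (N + 1) → GadgetNode n) (time : Fin (N + 1) → ℝ),
      (∀ k : Fin N, gadgetDist K A (node k.castSucc) (node k.succ) ≤
        time k.succ - time k.castSucc) ∧
      (∃ k, node k = GadgetNode.s ∧ time k ∈ Set.Icc (0 : ℝ) (6 * K)) ∧
      (∃ k, node k = GadgetNode.t ∧ time k ∈ Set.Icc (12 * (K : ℝ)) (18 * K)) ∧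
      (∃ k, node k = GadgetNode.u ∧ time k ∈ Set.Icc (6 * (K : ℝ)) (12 * K)) ∧
      (∀ i : Fin n, ∃ k, node k = GadgetNode.leaf i ∧
        time k ∈ Set.Icc (6 * (K : ℝ)) (12 * K)) ∧
      (∃ k, node k = GadgetNode.v ∧ time k ∈ Set.Icc (3 * (K : ℝ)) (9 * K)) ∧
      (∃ k, node k = GadgetNode.v ∧ time k ∈ Set.Icc (9 * (K : ℝ)) (15 * K))) ↔
    (∃ P : Finset (Fin n), ∑ i ∈ P, A i = K) := by
  have hKpos : (0:ℝ) < K := by exact_mod_cast hK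
  constructor
  · rintro ⟨N, node, time, hstep, ⟨ks, hks, hks0, hks6⟩, ⟨kt, hkt, hkt12, hkt18⟩,
      ⟨ku, hku, -, -⟩, hleaf, ⟨kv1, hv1, hv1a, hv1b⟩, ⟨kv2, hv2, hv2a, hv2b⟩⟩
    choose kk hkk htkk using hleaf
    have hAr : ∀ i, (0:ℝ) < A i := fun i => by exact_mod_cast hA i
    -- leaves come strictly after s
    have hks_lt : ∀ i, ks < kk i := by
      intro i
      by_contra h
      push_neg at h
      have hg := Stmt17Aux.gap hstep h
      rw [hkk i, hks, Stmt17Aux.gd_eq _ _ (by simp)] at hg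
      simp only [distToCenter] at hg
      have h6 := (htkk i).1
      linarith [hAr i]
    -- leaves come strictly before t
    have hkt_gt : ∀ i, kk i < kt := by
      intro i
      by_contra h
      push_neg at h
      have hg := Stmt17Aux.gap hstep h
      rw [hkk i, hkt, Stmt17Aux.gd_eq _ _ (by simp)] at hg
      simp only [distToCenter] at hg
      have h12 := (htkk i).2
      linarith [hAr i]
    -- two visits of v: first at time ≤ 9K, second at time ≥ 9K, ordered
    obtain ⟨a, b, hab, hna, hnb, hta3, hta9, htb9, htb15⟩ :
        ∃ a b : Fin (N + 1), a ≤ b ∧ node a = GadgetNode.v ∧ node b = GadgetNode.v ∧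
          3 * (K:ℝ) ≤ time a ∧ time a ≤ 9 * K ∧ 9 * (K:ℝ) ≤ time b ∧ time b ≤ 15 * K := by
      rcases le_total kv1 kv2 with hvv | hvv
      · exact ⟨kv1, kv2, hvv, hv1, hv2, hv1a, hv1b, hv2a, hv2b⟩
      · have h1 : time kv2 ≤ time kv1 := Stmt17Aux.time_mono hstep hvv
        exact ⟨kv2, kv1, hvv, hv2, hv1, by linarith, by linarith, by linarith, by linarith⟩
    have hs_a : ks < a := by
      by_contra h
      push_neg at h
      have hg := Stmt17Aux.gap hstep h
      rw [hks, hna, Stmt17Aux.gd_eq _ _ (by simp)] at hg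
      simp only [distToCenter] at hg
      linarith
    have hb_t : b < kt := by
      by_contra h
      push_neg at h
      have hg := Stmt17Aux.gap hstep h
      rw [hkt, hnb, Stmt17Aux.gd_eq _ _ (by simp)] at hg
      simp only [distToCenter] at hg
      linarith
    set P : Finset (Fin n) := Finset.univ.filter (fun i => kk i < a) with hPdef
    set Q : Finset (Fin n) := Finset.univ.filter (fun i => b < kk i) with hQdef
    set M : Finset (Fin n) := Finset.univ.filter (fun i => ¬ kk i < a ∧ ¬ b < kk i) with hMdef
    have htotal : ∑ i, (A i : ℝ) = 2 * K := by
      rw [← Nat.cast_sum]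
      exact_mod_cast hsum
    have hsplit : ∑ i ∈ P, (A i : ℝ) + ∑ i ∈ M, (A i : ℝ) + ∑ i ∈ Q, (A i : ℝ)
        = 2 * K := by
      have h1 := Finset.sum_filter_add_sum_filter_not Finset.univ
        (fun i => kk i < a) (fun i => (A i : ℝ))
      have h2 := Finset.sum_filter_add_sum_filter_not
        (Finset.univ.filter fun i => ¬ kk i < a) (fun i => b < kk i) (fun i => (A i : ℝ))
      rw [Finset.filter_filter, Finset.filter_filter] at h2
      have hQ' : Finset.univ.filter (fun i => ¬ kk i < a ∧ b < kk i) = Q := by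
        apply Finset.filter_congr
        intro i _
        constructor
        · exact fun h => h.2
        · exact fun h => ⟨fun h' => lt_asymm (h'.trans_le hab) h, h⟩
      rw [hQ'] at h2
      rw [← htotal, ← h1, ← h2, hMdef]
      ring
    -- chain from s through P to the first v visit
    have c1 := Stmt17Aux.chain hstep kk hkk P.card P le_rfl ks a hs_a.le
      (fun i hi => ⟨hks_lt i, (Finset.mem_filter.mp hi).2⟩)
      (fun i _ => by rw [hks]; simp)
      (fun i _ => by rw [hna]; simp)
      (Or.inr (by rw [hks, hna]; simp))
    rw [hks, hna] at c1
    simp only [distToCenter] at c1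
    -- chain from the second v visit through Q to t
    have c2 := Stmt17Aux.chain hstep kk hkk Q.card Q le_rfl b kt hb_t.le
      (fun i hi => ⟨(Finset.mem_filter.mp hi).2, hkt_gt i⟩)
      (fun i _ => by rw [hnb]; simp)
      (fun i _ => by rw [hkt]; simp)
      (Or.inr (by rw [hnb, hkt]; simp))
    rw [hnb, hkt] at c2
    simp only [distToCenter] at c2
    -- the middle set must be empty
    have hM : M = ∅ := by
      by_contra h
      have hMne : M.Nonempty := Finset.nonempty_of_ne_empty h
      have hMbetween : ∀ i ∈ M, a < kk i ∧ kk i < b := by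
        intro i hi
        obtain ⟨-, h1, h2⟩ := Finset.mem_filter.mp hi
        refine ⟨lt_of_le_of_ne (not_lt.mp h1) ?_, lt_of_le_of_ne (not_lt.mp h2) ?_⟩
        · intro hEq
          have := hkk i
          rw [← hEq, hna] at this
          exact absurd this (by simp)
        · intro hEq
          have := hkk i
          rw [hEq, hnb] at this
          exact absurd this (by simp)
      have c3 := Stmt17Aux.chain hstep kk hkk M.card M le_rfl a b hab hMbetween
        (fun i _ => by rw [hna]; simp)
        (fun i _ => by rw [hnb]; simp)
        (Or.inl hMne)
      rw [hna, hnb] at c3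
      simp only [distToCenter] at c3
      have h0 : 0 ≤ time ks := hks0
      have h18 : time kt ≤ 18 * K := hkt18
      linarith
    have hMsum : ∑ i ∈ M, (A i : ℝ) = 0 := by rw [hM]; simp
    have hSP : ∑ i ∈ P, (A i : ℝ) ≤ K := by linarith
    have hSQ : ∑ i ∈ Q, (A i : ℝ) ≤ K := by linarith
    have hPK : ∑ i ∈ P, (A i : ℝ) = K := by linarith
    refine ⟨P, ?_⟩
    have : ((∑ i ∈ P, A i : ℕ) : ℝ) = (K : ℝ) := by rw [Nat.cast_sum]; exact hPK
    exact_mod_cast this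
  · rintro ⟨P, hP⟩
    have hK0 : (0:ℝ) ≤ K := Nat.cast_nonneg K
    have hPc : ∑ i ∈ Pᶜ, A i = K := by
      have := Finset.sum_add_sum_compl P A
      omega
    have hsumP : ((P.toList.map fun i => (A i : ℝ)).sum) = (K:ℝ) := by
      rw [Finset.sum_map_toList]
      rw [← Nat.cast_sum]
      exact_mod_cast hP
    have hsumPc : ((Pᶜ.toList.map fun i => (A i : ℝ)).sum) = (K:ℝ) := by
      rw [Finset.sum_map_toList]
      rw [← Nat.cast_sum]
      exact_mod_cast hPc
    set rest2 : List (GadgetNode n × ℝ) :=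
      [(GadgetNode.u, 12*(K:ℝ)), (GadgetNode.t, 18*(K:ℝ))] with hrest2
    set lw2 := Stmt17Aux.leafWalk A Pᶜ.toList (10*(K:ℝ)) with hlw2
    set mid : List (GadgetNode n × ℝ) :=
      (GadgetNode.u, 8*(K:ℝ)) :: (GadgetNode.v, 9*(K:ℝ)) :: (GadgetNode.v, 9*(K:ℝ)) ::
        (GadgetNode.u, 10*(K:ℝ)) :: (lw2 ++ rest2) with hmid
    set lw1 := Stmt17Aux.leafWalk A P.toList (6*(K:ℝ)) with hlw1
    set l : List (GadgetNode n × ℝ) :=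
      (GadgetNode.s, (0:ℝ)) :: (GadgetNode.u, 6*(K:ℝ)) :: (lw1 ++ mid) with hl
    have ch2 : List.Chain' (Stmt17Aux.Rel K A) ((GadgetNode.u, 10*(K:ℝ)) :: (lw2 ++ rest2)) := by
      have h12 : 10*(K:ℝ) + 2 * ((Pᶜ.toList.map fun i => (A i : ℝ)).sum) = 12*(K:ℝ) := by
        rw [hsumPc]; ring
      have := Stmt17Aux.leafWalk_chain Pᶜ.toList (10*(K:ℝ)) rest2 (by
        rw [h12, hrest2]
        refine List.isChain_cons_cons.mpr ⟨?_, List.isChain_cons_cons.mpr ⟨?_, List.isChain_singleton _⟩⟩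
        · show Stmt17Aux.Rel K A _ _
          simp [Stmt17Aux.Rel, gadgetDist]
        · show Stmt17Aux.Rel K A _ _
          simp [Stmt17Aux.Rel, gadgetDist, distToCenter]
          linarith)
      exact this
    have chmid : List.Chain' (Stmt17Aux.Rel K A) mid := by
      rw [hmid]
      refine List.isChain_cons_cons.mpr ⟨?_, List.isChain_cons_cons.mpr ⟨?_, List.isChain_cons_cons.mpr ⟨?_, ch2⟩⟩⟩
      · simp [Stmt17Aux.Rel, gadgetDist, distToCenter]; linarith
      · simp [Stmt17Aux.Rel, gadgetDist, distToCenter]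
      · simp [Stmt17Aux.Rel, gadgetDist, distToCenter]; linarith
    have ch1 : List.Chain' (Stmt17Aux.Rel K A) ((GadgetNode.u, 6*(K:ℝ)) :: (lw1 ++ mid)) := by
      have h8 : 6*(K:ℝ) + 2 * ((P.toList.map fun i => (A i : ℝ)).sum) = 8*(K:ℝ) := by
        rw [hsumP]; ring
      exact Stmt17Aux.leafWalk_chain P.toList (6*(K:ℝ)) mid (by
        rw [h8, hmid]
        exact List.isChain_cons_cons.mpr ⟨by simp [Stmt17Aux.Rel, gadgetDist], chmid⟩)
    have ch : List.Chain' (Stmt17Aux.Rel K A) l := by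
      rw [hl]
      refine List.isChain_cons_cons.mpr ⟨?_, ch1⟩
      simp [Stmt17Aux.Rel, gadgetDist, distToCenter]
      try linarith
    obtain ⟨N, node, time, hstep, hmem⟩ := Stmt17Aux.ofList l (by rw [hl]; simp) ch
    refine ⟨N, node, time, hstep, ?_, ?_, ?_, ?_, ?_, ?_⟩
    · obtain ⟨k, hk1, hk2⟩ := hmem (GadgetNode.s, (0:ℝ)) (by rw [hl]; simp)
      dsimp only at hk1 hk2
      exact ⟨k, hk1, by rw [hk2]; exact ⟨le_refl 0, by linarith⟩⟩
    · obtain ⟨k, hk1, hk2⟩ := hmem (GadgetNode.t, 18*(K:ℝ)) (by rw [hl, hmid, hrest2]; simp)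
      dsimp only at hk1 hk2
      exact ⟨k, hk1, by rw [hk2]; exact ⟨by linarith, le_refl _⟩⟩
    · obtain ⟨k, hk1, hk2⟩ := hmem (GadgetNode.u, 6*(K:ℝ)) (by rw [hl]; simp)
      dsimp only at hk1 hk2
      exact ⟨k, hk1, by rw [hk2]; exact ⟨le_refl _, by linarith⟩⟩
    · intro i
      by_cases hi : i ∈ P
      · obtain ⟨c, hc, hc1, hc2⟩ := Stmt17Aux.leafWalk_mem hA P.toList (6*(K:ℝ)) i
          (Finset.mem_toList.mpr hi)
        rw [hsumP] at hc2
        obtain ⟨k, hk1, hk2⟩ := hmem (GadgetNode.leaf i, c) (by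
          rw [hl]
          simp only [List.mem_cons, List.mem_append]
          right; right; left
          rw [hlw1]; exact hc)
        exact ⟨k, hk1, by rw [hk2]; exact ⟨hc1, by linarith⟩⟩
      · obtain ⟨c, hc, hc1, hc2⟩ := Stmt17Aux.leafWalk_mem hA Pᶜ.toList (10*(K:ℝ)) i
          (Finset.mem_toList.mpr (Finset.mem_compl.mpr hi))
        rw [hsumPc] at hc2
        obtain ⟨k, hk1, hk2⟩ := hmem (GadgetNode.leaf i, c) (by
          rw [hl, hmid]
          simp only [List.mem_cons, List.mem_append]
          right; right; right
          refine Or.inr (Or.inr (Or.inr (Or.inr (Or.inl ?_))))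
          rw [hlw2]; exact hc)
        exact ⟨k, hk1, by rw [hk2]; exact ⟨by linarith, by linarith⟩⟩
    · obtain ⟨k, hk1, hk2⟩ := hmem (GadgetNode.v, 9*(K:ℝ)) (by rw [hl, hmid]; simp)
      dsimp only at hk1 hk2
      exact ⟨k, hk1, by rw [hk2]; exact ⟨by linarith, le_refl _⟩⟩
    · obtain ⟨k, hk1, hk2⟩ := hmem (GadgetNode.v, 9*(K:ℝ)) (by rw [hl, hmid]; simp)
      dsimp only at hk1 hk2
      exact ⟨k, hk1, by rw [hk2]; exact ⟨le_refl _, by linarith⟩⟩
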